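/- Let A ∈ ℝ^{n×n} be an expanding matrix, let ℛ₁, ℛ₂ ⊂ ℝ^n be finite nonempty sets, and for a finite nonempty 𝒟 ⊂ ℝ^n write F(A,𝒟) := { Σ_{j=1}^{∞} A^{−j} d_j : d_j ∈ 𝒟 for all j ≥ 1 }. Then F(A, ℛ₁ + A·ℛ₂) = F(A, ℛ₁ + ℛ₂) + ℛ₂, where ℛ₁ + A·ℛ₂ = { r₁ + A r₂ : r₁ ∈ ℛ₁, r₂ ∈ ℛ₂ }, ℛ₁ + ℛ₂ = { r₁ + r₂ : r₁ ∈ ℛ₁, r₂ ∈ ℛ₂ }, and the right-hand side is the Minkowski sum { x + r₂ : x ∈ F(A, ℛ₁ + ℛ₂), r₂ ∈ ℛ₂ }. -/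

import Mathlib

open Matrix Pointwise

/-- A real matrix is expanding if all of its complex eigenvalues (the roots of its
characteristic polynomial over `ℂ`) have modulus strictly greater than `1`. -/
def IsExpanding {n : ℕ} (A : Matrix (Fin n) (Fin n) ℝ) : Prop :=
  ∀ μ : ℂ, (A.charpoly.map (algebraMap ℝ ℂ)).IsRoot μ → 1 < ‖μ‖

/-- The set `F(A,D) = { Σ_{j=1}^∞ A^{-j} d_j : d_j ∈ D }`. -/
noncomputable def tileF {n : ℕ} (A : Matrix (Fin n) (Fin n) ℝ) (D : Set (Fin n → ℝ)) :
    Set (Fin n → ℝ) :=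
  {x | ∃ d : ℕ → Fin n → ℝ, (∀ j, d j ∈ D) ∧ x = ∑' j : ℕ, (A⁻¹ ^ (j + 1)) *ᵥ d j}

section Aux

attribute [local instance] Matrix.linftyOpNormedAddCommGroup Matrix.linftyOpNormedRing
  Matrix.linftyOpNormedAlgebra

variable {n : ℕ}

open Filter Polynomial

lemma isUnit_det_of_isExpanding (A : Matrix (Fin n) (Fin n) ℝ) (hA : IsExpanding A) :
    IsUnit A.det := by
  rw [isUnit_iff_ne_zero]
  intro h0
  have hc : A.charpoly.coeff 0 = 0 := by
    have := A.det_eq_sign_charpoly_coeff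
    rw [h0] at this
    rcases mul_eq_zero.mp this.symm with h | h
    · exact absurd h (by positivity)
    · exact h
  have : (A.charpoly.map (algebraMap ℝ ℂ)).IsRoot 0 := by
    rw [IsRoot, eval_zero_map, ← coeff_zero_eq_eval_zero, hc, map_zero]
  have := hA 0 this
  norm_num at this

lemma mem_spectrum_iff_isRoot (M : Matrix (Fin n) (Fin n) ℂ) (μ : ℂ) :
    μ ∈ spectrum ℂ M ↔ M.charpoly.IsRoot μ := by
  rw [spectrum.mem_iff, Matrix.isUnit_iff_isUnit_det, isUnit_iff_ne_zero, not_not,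
    Matrix.charpoly, IsRoot, _root_.eval_det, matPolyEquiv_charmatrix]
  simp only [eval_sub, eval_X, eval_C]
  rw [Matrix.algebraMap_eq_diagonal, Matrix.scalar_apply]
  constructor
  · intro h; rw [← h]; congr 1
  · intro h; rw [← h]; congr 1

lemma nnnorm_map_ofReal (M : Matrix (Fin n) (Fin n) ℝ) :
    ‖M.map (algebraMap ℝ ℂ)‖₊ = ‖M‖₊ := by
  simp [Matrix.linfty_opNNNorm_def, Matrix.map_apply, Complex.coe_algebraMap]

lemma exists_geom_bound [Nonempty (Fin n)] (A : Matrix (Fin n) (Fin n) ℝ)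
    (hA : IsExpanding A) :
    ∃ c : ℝ, 0 ≤ c ∧ c < 1 ∧ ∀ᶠ k in atTop, ‖A⁻¹ ^ k‖ ≤ c ^ k := by
  set f := algebraMap ℝ ℂ
  set Aℂ := A.map f with hAℂ
  have hdet : IsUnit A.det := isUnit_det_of_isExpanding A hA
  have hdetℂ : IsUnit Aℂ.det := by
    rw [hAℂ, ← RingHom.mapMatrix_apply, ← RingHom.map_det]
    exact hdet.map f
  have hUℂ : IsUnit Aℂ := (Matrix.isUnit_iff_isUnit_det _).2 hdetℂ
  have hAinv : (A⁻¹).map f = Aℂ⁻¹ := by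
    symm
    apply Matrix.inv_eq_right_inv
    rw [hAℂ, ← Matrix.map_mul, Matrix.mul_nonsing_inv _ hdet]
    simp
  obtain ⟨u, hu⟩ := id hUℂ
  have hcoe : ((u⁻¹ : (Matrix (Fin n) (Fin n) ℂ)ˣ) : Matrix (Fin n) (Fin n) ℂ) = Aℂ⁻¹ := by
    rw [Matrix.coe_units_inv, hu]
  have hspec : ∀ μ ∈ spectrum ℂ (Aℂ⁻¹), ‖μ‖₊ < 1 := by
    intro μ hμ
    have hμ0 : μ ≠ 0 := by
      intro h
      rw [h, spectrum.zero_mem_iff] at hμ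
      exact hμ (Matrix.isUnit_nonsing_inv_iff.2 hUℂ)
    have h3 : ((((Units.mk0 μ hμ0)⁻¹)⁻¹ : ℂˣ) : ℂ)
        ∈ spectrum ℂ ((u⁻¹ : (Matrix (Fin n) (Fin n) ℂ)ˣ) : Matrix (Fin n) (Fin n) ℂ) := by
      rw [inv_inv, hcoe]
      exact hμ
    have h4 : (((Units.mk0 μ hμ0)⁻¹ : ℂˣ) : ℂ) ∈ spectrum ℂ (u : Matrix (Fin n) (Fin n) ℂ) :=
      spectrum.inv_mem_iff.mpr h3
    rw [hu] at h4
    have h5 : μ⁻¹ ∈ spectrum ℂ Aℂ := by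
      simpa using h4
    have hroot : (A.charpoly.map f).IsRoot (μ⁻¹) := by
      have := (mem_spectrum_iff_isRoot Aℂ (μ⁻¹)).1 h5
      rwa [hAℂ, Matrix.charpoly_map] at this
    have h6 := hA _ hroot
    rw [norm_inv] at h6
    have hx : 0 < ‖μ‖ := norm_pos_iff.mpr hμ0
    have habs : ‖μ‖ < 1 := by
      have h7 := mul_lt_mul_of_pos_left h6 hx
      rwa [mul_one, mul_inv_cancel₀ hx.ne'] at h7
    simpa [← NNReal.coe_lt_coe] using habs
  haveI : Nonempty (Fin n) := ‹_›
  have hρ : spectralRadius ℂ (Aℂ⁻¹) < (1 : NNReal) :=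
    spectrum.spectralRadius_lt_of_forall_lt _ hspec
  obtain ⟨r, hr1, hr2⟩ := exists_between hρ
  have hrtop : r ≠ ⊤ := (hr2.trans_le (by norm_num)).ne
  have hG := spectrum.pow_nnnorm_pow_one_div_tendsto_nhds_spectralRadius (Aℂ⁻¹)
  have hev : ∀ᶠ k : ℕ in atTop, (‖(Aℂ⁻¹) ^ k‖₊ : ENNReal) ^ (1 / (k : ℝ)) < r :=
    hG.eventually_lt_const hr1
  refine ⟨r.toReal, ENNReal.toReal_nonneg, ?_, ?_⟩
  · rw [← ENNReal.toReal_one]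
    exact (ENNReal.toReal_lt_toReal hrtop (by norm_num)).2 (by simpa using hr2)
  · filter_upwards [hev, eventually_ge_atTop 1] with k hk hk1
    have hkpos : (0 : ℝ) < k := by exact_mod_cast hk1
    have hlt : (‖(Aℂ⁻¹) ^ k‖₊ : ENNReal) < r ^ k := by
      have := ENNReal.rpow_lt_rpow hk hkpos
      rwa [← ENNReal.rpow_mul, one_div_mul_cancel hkpos.ne', ENNReal.rpow_one,
        ENNReal.rpow_natCast] at this
    have hnorm : ‖A⁻¹ ^ k‖₊ = ‖(Aℂ⁻¹) ^ k‖₊ := by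
      rw [← hAinv, ← nnnorm_map_ofReal (A⁻¹ ^ k)]
      congr 1
      exact map_pow (RingHom.mapMatrix f) _ _
    have := (ENNReal.toReal_lt_toReal (by simp) (by simp [hrtop])).2 hlt
    rw [ENNReal.toReal_pow] at this
    calc ‖A⁻¹ ^ k‖ = ((‖(Aℂ⁻¹) ^ k‖₊ : ENNReal)).toReal := by
          rw [← hnorm]; simp [coe_nnnorm]
      _ ≤ r.toReal ^ k := this.le

lemma summable_aux (A : Matrix (Fin n) (Fin n) ℝ) (hA : IsExpanding A)
    (v : ℕ → Fin n → ℝ) (C : ℝ) (hv : ∀ j, ‖v j‖ ≤ C) :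
    Summable (fun j => (A⁻¹ ^ j) *ᵥ v j) := by
  cases isEmpty_or_nonempty (Fin n) with
  | inl h =>
    haveI : Subsingleton (Fin n → ℝ) := ⟨fun a b => funext fun i => h.elim i⟩
    have : (fun j => (A⁻¹ ^ j) *ᵥ v j) = fun _ => 0 := funext fun j => Subsingleton.elim _ _
    rw [this]; exact summable_zero
  | inr h =>
    obtain ⟨c, hc0, hc1, hev⟩ := exists_geom_bound A hA
    have hC : 0 ≤ C := le_trans (norm_nonneg _) (hv 0)
    apply Summable.of_norm_bounded_eventually (g := fun j => C * c ^ j)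
      (((summable_geometric_of_lt_one hc0 hc1).mul_left C))
    rw [Nat.cofinite_eq_atTop]
    filter_upwards [hev] with k hk
    calc ‖(A⁻¹ ^ k) *ᵥ v k‖ ≤ ‖A⁻¹ ^ k‖ * ‖v k‖ := Matrix.linfty_opNorm_mulVec _ _
      _ ≤ c ^ k * C := by
          apply mul_le_mul hk (hv k) (norm_nonneg _) (by positivity)
      _ = C * c ^ k := mul_comm _ _

lemma summable_aux' (A : Matrix (Fin n) (Fin n) ℝ) (hA : IsExpanding A)
    (v : ℕ → Fin n → ℝ) (C : ℝ) (hv : ∀ j, ‖v j‖ ≤ C) :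
    Summable (fun j => (A⁻¹ ^ (j + 1)) *ᵥ v j) := by
  have : (fun j => (A⁻¹ ^ (j + 1)) *ᵥ v j) = fun j => (A⁻¹ ^ j) *ᵥ (A⁻¹ *ᵥ v j) := by
    funext j
    rw [Matrix.mulVec_mulVec, pow_succ]
  rw [this]
  exact summable_aux A hA _ (‖A⁻¹‖ * C) fun j =>
    le_trans (Matrix.linfty_opNorm_mulVec _ _)
      (mul_le_mul_of_nonneg_left (hv j) (norm_nonneg _))

lemma key_rearrange (A : Matrix (Fin n) (Fin n) ℝ) (hA : IsExpanding A)
    (a b : ℕ → Fin n → ℝ) (Ca Cb : ℝ) (ha : ∀ j, ‖a j‖ ≤ Ca) (hb : ∀ j, ‖b j‖ ≤ Cb) :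
    ∑' j : ℕ, (A⁻¹ ^ (j + 1)) *ᵥ (a j + A *ᵥ b j)
      = (∑' j : ℕ, (A⁻¹ ^ (j + 1)) *ᵥ (a j + b (j + 1))) + b 0 := by
  have hdet : IsUnit A.det := isUnit_det_of_isExpanding A hA
  have hinv : A⁻¹ * A = 1 := Matrix.nonsing_inv_mul _ hdet
  have S1 : Summable (fun j => (A⁻¹ ^ (j + 1)) *ᵥ a j) := summable_aux' A hA a Ca ha
  have S2 : Summable (fun j => (A⁻¹ ^ j) *ᵥ b j) := summable_aux A hA b Cb hb
  have S3 : Summable (fun j => (A⁻¹ ^ (j + 1)) *ᵥ b (j + 1)) :=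
    (summable_nat_add_iff 1).2 S2
  have hstep : ∀ j, (A⁻¹ ^ (j + 1)) *ᵥ (A *ᵥ b j) = (A⁻¹ ^ j) *ᵥ b j := by
    intro j
    rw [Matrix.mulVec_mulVec, pow_succ, mul_assoc, hinv, mul_one]
  have hL : (fun j => (A⁻¹ ^ (j + 1)) *ᵥ (a j + A *ᵥ b j))
      = fun j => (A⁻¹ ^ (j + 1)) *ᵥ a j + (A⁻¹ ^ j) *ᵥ b j := by
    funext j
    rw [Matrix.mulVec_add, hstep]
  have hR : (fun j => (A⁻¹ ^ (j + 1)) *ᵥ (a j + b (j + 1)))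
      = fun j => (A⁻¹ ^ (j + 1)) *ᵥ a j + (A⁻¹ ^ (j + 1)) *ᵥ b (j + 1) := by
    funext j
    rw [Matrix.mulVec_add]
  rw [hL, hR, S1.tsum_add S2, S1.tsum_add S3, S2.tsum_eq_zero_add]
  simp only [pow_zero, Matrix.one_mulVec]
  abel

lemma exists_bound_of_finite {R : Set (Fin n → ℝ)} (h : R.Finite) (hne : R.Nonempty) :
    ∃ C : ℝ, ∀ x ∈ R, ‖x‖ ≤ C := by
  obtain ⟨C, hC⟩ := (h.image fun x => ‖x‖).bddAbove
  exact ⟨C, fun x hx => hC (Set.mem_image_of_mem _ hx)⟩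

end Aux

theorem stmt17 (n : ℕ) (A : Matrix (Fin n) (Fin n) ℝ) (hA : IsExpanding A)
    (R1 R2 : Set (Fin n → ℝ)) (h1fin : R1.Finite) (h1ne : R1.Nonempty)
    (h2fin : R2.Finite) (h2ne : R2.Nonempty) :
    tileF A (R1 + (A *ᵥ ·) '' R2) = tileF A (R1 + R2) + R2 := by
  obtain ⟨C1, hC1⟩ := exists_bound_of_finite h1fin h1ne
  obtain ⟨C2, hC2⟩ := exists_bound_of_finite h2fin h2ne
  ext x
  constructor
  · rintro ⟨d, hd, rfl⟩
    have hchoice : ∀ j, ∃ r1 ∈ R1, ∃ r2 ∈ R2, r1 + A *ᵥ r2 = d j := by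
      intro j
      obtain ⟨r1, hr1, y, hy, hsum⟩ := Set.mem_add.1 (hd j)
      obtain ⟨r2, hr2, rfl⟩ := hy
      exact ⟨r1, hr1, r2, hr2, hsum⟩
    choose r1 hr1 r2 hr2 hsum using hchoice
    have hd' : (fun j => (A⁻¹ ^ (j + 1)) *ᵥ d j) =
        fun j => (A⁻¹ ^ (j + 1)) *ᵥ (r1 j + A *ᵥ r2 j) := by
      funext j; rw [hsum]
    rw [Set.mem_add]
    refine ⟨∑' j : ℕ, (A⁻¹ ^ (j + 1)) *ᵥ (r1 j + r2 (j + 1)), ?_, r2 0, hr2 0, ?_⟩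
    · exact ⟨fun j => r1 j + r2 (j + 1), fun j => Set.add_mem_add (hr1 j) (hr2 (j + 1)), rfl⟩
    · rw [hd', key_rearrange A hA r1 r2 C1 C2 (fun j => hC1 _ (hr1 j)) (fun j => hC2 _ (hr2 j))]
  · intro hx
    obtain ⟨y, hy, s, hs, rfl⟩ := Set.mem_add.1 hx
    obtain ⟨e, he, rfl⟩ := hy
    have hchoice : ∀ j, ∃ r1 ∈ R1, ∃ r2 ∈ R2, r1 + r2 = e j := fun j => Set.mem_add.1 (he j)
    choose r1 hr1 r2 hr2 hsum using hchoice
    set b : ℕ → Fin n → ℝ := fun j => Nat.casesOn j s r2 with hb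
    have hbmem : ∀ j, b j ∈ R2 := by
      intro j; cases j with
      | zero => exact hs
      | succ k => exact hr2 k
    refine ⟨fun j => r1 j + A *ᵥ b j, ?_, ?_⟩
    · intro j
      exact Set.add_mem_add (hr1 j) (Set.mem_image_of_mem _ (hbmem j))
    · rw [key_rearrange A hA r1 b C1 C2 (fun j => hC1 _ (hr1 j)) (fun j => hC2 _ (hbmem j))]
      have h1 : (fun j => (A⁻¹ ^ (j + 1)) *ᵥ (r1 j + b (j + 1)))
          = fun j => (A⁻¹ ^ (j + 1)) *ᵥ e j := by
        funext j
        rw [show b (j + 1) = r2 j from rfl, hsum]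
      rw [h1]
      rfl
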